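/- Under the same assumptions on c and with c̃ defined as before, let μ(n) = Z⁻¹ ∏_{k=1}^n c(k)⁻¹ and μ̃(n) = Z̃⁻¹ ∏_{k=1}^n c̃(k)⁻¹ be the associated normalized zero-range single-site measures on ℕ (assuming both are normalizable). Then there exists C ∈ [1, ∞) such that C⁻¹ ≤ μ̃(n)/μ(n) ≤ C for all n ∈ ℕ. -/

import Mathlib

open Finset


private lemma sum_shift (h : ℕ → ℝ) (j : ℕ) : ∀ n : ℕ,
    ∑ i ∈ range n, (h (i + j) - h i) = ∑ i ∈ range j, (h (n + i) - h i) := by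
  intro n
  induction n with
  | zero => simp
  | succ n ih =>
    rw [Finset.sum_range_succ, ih]
    have : ∑ i ∈ range j, (h (n + 1 + i) - h i)
        = ∑ i ∈ range j, ((h (n + i) - h i) + (h (n + (i+1)) - h (n + i))) := by
      apply Finset.sum_congr rfl; intro i _
      have : n + 1 + i = n + (i + 1) := by omega
      rw [this]; ring
    rw [this, Finset.sum_add_distrib, Finset.sum_range_sub (fun i => h (n + i)) j]
    have : n + j = j + n := by omega
    rw [this]; ring

private lemma sum_inv_sq (m : ℕ) (hm : 2 ≤ m) : ∀ N : ℕ,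
    ∑ i ∈ range N, (((m + i : ℕ) : ℝ) ^ 2)⁻¹ ≤ ((m : ℝ) - 1)⁻¹ := by
  have hm1 : (1:ℝ) ≤ (m:ℝ) - 1 := by
    have : (2:ℝ) ≤ (m:ℝ) := by exact_mod_cast hm
    linarith
  intro N
  have key : ∀ N : ℕ, ∑ i ∈ range N, (((m + i : ℕ) : ℝ) ^ 2)⁻¹
      ≤ ((m : ℝ) - 1)⁻¹ - ((m : ℝ) + N - 1)⁻¹ := by
    intro N
    induction N with
    | zero => simp
    | succ N ih =>
      rw [Finset.sum_range_succ]
      have hN : ((m + N : ℕ) : ℝ) = (m : ℝ) + N := by push_cast; ring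
      have h1 : (0:ℝ) < (m:ℝ) + N - 1 := by
        have : (0:ℝ) ≤ (N:ℝ) := Nat.cast_nonneg N
        linarith
      have h2 : (0:ℝ) < (m:ℝ) + N := by linarith
      have step : (((m + N : ℕ) : ℝ) ^ 2)⁻¹ ≤ ((m : ℝ) + N - 1)⁻¹ - ((m : ℝ) + N)⁻¹ := by
        rw [hN, inv_sub_inv (ne_of_gt h1) (ne_of_gt h2)]
        rw [inv_eq_one_div, div_le_div_iff₀ (by positivity) (by positivity)]
        nlinarith
      have : ((m:ℝ) + (N+1:ℕ) - 1)⁻¹ = ((m:ℝ) + N)⁻¹ := by push_cast; ring_nf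
      rw [this]
      linarith
  calc ∑ i ∈ range N, (((m + i : ℕ) : ℝ) ^ 2)⁻¹ ≤ ((m : ℝ) - 1)⁻¹ - ((m : ℝ) + N - 1)⁻¹ := key N
    _ ≤ ((m : ℝ) - 1)⁻¹ := by
        have : (0:ℝ) < (m:ℝ) + N - 1 := by
          have : (0:ℝ) ≤ (N:ℝ) := Nat.cast_nonneg N
          linarith
        have := inv_nonneg.mpr (le_of_lt this)
        linarith

private lemma gauss_Icc (m : ℕ) : ∑ j ∈ Icc 1 m, (j : ℝ) = m * (m + 1) / 2 := by
  induction m with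
  | zero => simp
  | succ m ih =>
    rw [Finset.sum_Icc_succ_top (by omega), ih]
    push_cast; ring


private lemma abel_bound (f g : ℕ → ℝ) (F V M : ℝ) (hM : ∀ n, |∑ i ∈ range n, g i| ≤ M)
    (hfb : ∀ i, |f i| ≤ F) (hv : ∀ n, ∑ i ∈ range n, |f (i+1) - f i| ≤ V) :
    ∀ n, |∑ i ∈ range n, f i * g i| ≤ F * M + V * M := by
  have hM0 : 0 ≤ M := le_trans (abs_nonneg _) (hM 0)
  have hF0 : 0 ≤ F := le_trans (abs_nonneg _) (hfb 0)
  have hV0 : 0 ≤ V := le_trans (Finset.sum_nonneg (fun i _ => abs_nonneg _)) (hv 1)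
  intro n
  have key := Finset.sum_range_by_parts f g n
  simp only [smul_eq_mul] at key
  rw [key]
  have h1 : |f (n-1) * ∑ i ∈ range n, g i| ≤ F * M := by
    rw [abs_mul]
    exact mul_le_mul (hfb _) (hM n) (abs_nonneg _) hF0
  have h2 : |∑ i ∈ range (n-1), (f (i+1) - f i) * ∑ j ∈ range (i+1), g j| ≤ V * M := by
    calc |∑ i ∈ range (n-1), (f (i+1) - f i) * ∑ j ∈ range (i+1), g j|
        ≤ ∑ i ∈ range (n-1), |(f (i+1) - f i) * ∑ j ∈ range (i+1), g j| :=
          Finset.abs_sum_le_sum_abs _ _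
      _ ≤ ∑ i ∈ range (n-1), |f (i+1) - f i| * M := by
          apply Finset.sum_le_sum
          intro i _
          rw [abs_mul]
          exact mul_le_mul_of_nonneg_left (hM (i+1)) (abs_nonneg _)
      _ = (∑ i ∈ range (n-1), |f (i+1) - f i|) * M := by rw [Finset.sum_mul]
      _ ≤ V * M := mul_le_mul_of_nonneg_right (hv (n-1)) hM0
  calc |f (n-1) * (∑ i ∈ range n, g i) - ∑ i ∈ range (n-1), (f (i+1) - f i) * ∑ j ∈ range (i+1), g j|
      ≤ |f (n-1) * ∑ i ∈ range n, g i| + |∑ i ∈ range (n-1), (f (i+1) - f i) * ∑ j ∈ range (i+1), g j| :=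
        abs_sub _ _
    _ ≤ F * M + V * M := add_le_add h1 h2

private lemma exp_lb (y : ℝ) (hy : -(1/2) ≤ y) : Real.exp (y - 2*y^2) ≤ 1 + y := by
  have h1 : 1 + (2*y^2 - y) ≤ Real.exp (2*y^2 - y) := by
    have := Real.add_one_le_exp (2*y^2 - y); linarith
  have hpos : (0:ℝ) < 1 - y + 2*y^2 := by nlinarith
  have h2 : Real.exp (y - 2*y^2) ≤ (1 - y + 2*y^2)⁻¹ := by
    have he : Real.exp (y - 2*y^2) * (1 - y + 2*y^2) ≤ 1 := by
      calc Real.exp (y - 2*y^2) * (1 - y + 2*y^2)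
          ≤ Real.exp (y - 2*y^2) * Real.exp (2*y^2 - y) := by
            apply mul_le_mul_of_nonneg_left _ (le_of_lt (Real.exp_pos _))
            linarith
        _ = 1 := by rw [← Real.exp_add]; norm_num
    rw [inv_eq_one_div, le_div_iff₀ hpos]
    exact he
  have h3 : (1 - y + 2*y^2)⁻¹ ≤ 1 + y := by
    rw [inv_eq_one_div, div_le_iff₀ hpos]
    nlinarith [mul_nonneg (sq_nonneg y) (by linarith : (0:ℝ) ≤ 1 + 2*y)]
  linarith

private lemma prod_bounds (y : ℕ → ℝ) (K Q : ℝ)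
    (hy : ∀ i, -(1/2) ≤ y i)
    (hS : ∀ n, |∑ i ∈ range n, y i| ≤ K)
    (hQ : ∀ n, ∑ i ∈ range n, (y i)^2 ≤ Q) :
    ∀ n, Real.exp (-(K + 2*Q)) ≤ ∏ i ∈ range n, (1 + y i) ∧
      ∏ i ∈ range n, (1 + y i) ≤ Real.exp K := by
  intro n
  have hupper : ∏ i ∈ range n, (1 + y i) ≤ Real.exp K := by
    calc ∏ i ∈ range n, (1 + y i) ≤ ∏ i ∈ range n, Real.exp (y i) := by
          apply Finset.prod_le_prod
          · intro i _; have := hy i; linarith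
          · intro i _; have := Real.add_one_le_exp (y i); linarith
      _ = Real.exp (∑ i ∈ range n, y i) := by rw [Real.exp_sum]
      _ ≤ Real.exp K := Real.exp_le_exp.mpr (le_trans (le_abs_self _) (hS n))
  have hlower : Real.exp (-(K + 2*Q)) ≤ ∏ i ∈ range n, (1 + y i) := by
    have e1 : Real.exp (∑ i ∈ range n, (y i - 2*(y i)^2)) ≤ ∏ i ∈ range n, (1 + y i) := by
      rw [Real.exp_sum]
      apply Finset.prod_le_prod
      · intro i _; exact le_of_lt (Real.exp_pos _)
      · intro i _; exact exp_lb (y i) (hy i)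
    have e2 : -(K + 2*Q) ≤ ∑ i ∈ range n, (y i - 2*(y i)^2) := by
      rw [Finset.sum_sub_distrib]
      have hSn : -K ≤ ∑ i ∈ range n, y i := by
        have := hS n
        have := neg_abs_le (∑ i ∈ range n, y i)
        linarith
      have : ∑ i ∈ range n, 2*(y i)^2 = 2 * ∑ i ∈ range n, (y i)^2 := by
        rw [Finset.mul_sum]
      rw [this]
      have := hQ n
      linarith
    exact le_trans (Real.exp_le_exp.mpr e2) e1
  exact ⟨hlower, hupper⟩

private lemma incr_bound (c : ℕ → ℝ) (Cl : ℝ) (H2 : ∀ n : ℕ, |c (n + 1) - c n| ≤ Cl) :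
    ∀ j m, |c (m + j) - c m| ≤ j * Cl := by
  intro j
  induction j with
  | zero => simp
  | succ j ih =>
    intro m
    have h1 := H2 (m + j)
    have h2 := ih m
    calc |c (m + (j+1)) - c m| = |(c (m + j + 1) - c (m + j)) + (c (m + j) - c m)| := by
          ring_nf
      _ ≤ |c (m + j + 1) - c (m + j)| + |c (m + j) - c m| := abs_add_le _ _
      _ ≤ Cl + j * Cl := by linarith
      _ = (j + 1 : ℕ) * Cl := by push_cast; ring

section
variable (c : ℕ → ℝ) (δ : ℝ) (n₀ : ℕ) (Cl : ℝ) (ct : ℕ → ℝ)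

private lemma delta2_bound (hn₀ : 1 ≤ n₀) (H2 : ∀ n : ℕ, |c (n + 1) - c n| ≤ Cl)
    (j k : ℕ) (hj : j ≤ n₀ - 1) (hk : n₀ ≤ k) :
    |c (k + j) + c (k - j) - 2 * c k| ≤ 2 * n₀ * Cl := by
  have hCl : 0 ≤ Cl := le_trans (abs_nonneg _) (H2 0)
  have h1 : |c (k + j) - c k| ≤ j * Cl := incr_bound c Cl H2 j k
  have h2 : |c ((k - j) + j) - c (k - j)| ≤ j * Cl := incr_bound c Cl H2 j (k - j)
  have hkj : (k - j) + j = k := by omega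
  rw [hkj] at h2
  have hjn : (j : ℝ) ≤ (n₀ : ℝ) := by exact_mod_cast (by omega : j ≤ n₀)
  calc |c (k + j) + c (k - j) - 2 * c k|
      = |(c (k + j) - c k) - (c k - c (k - j))| := by ring_nf
    _ ≤ |c (k + j) - c k| + |c k - c (k - j)| := abs_sub _ _
    _ ≤ j * Cl + j * Cl := by linarith
    _ ≤ 2 * n₀ * Cl := by nlinarith

private lemma weight_bound (hn₀ : 1 ≤ n₀) (j : ℕ) (hj : j ∈ Icc 1 (n₀ - 1)) :
    0 ≤ ((n₀ : ℝ) - j) / n₀ ∧ ((n₀ : ℝ) - j) / n₀ ≤ 1 := by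
  simp only [mem_Icc] at hj
  have h1 : (1:ℝ) ≤ (j:ℝ) := by exact_mod_cast hj.1
  have h2 : (j:ℝ) ≤ (n₀:ℝ) := by exact_mod_cast (by omega : j ≤ n₀)
  have h3 : (1:ℝ) ≤ (n₀:ℝ) := by exact_mod_cast hn₀
  constructor
  · apply div_nonneg (by linarith) (by linarith)
  · rw [div_le_one (by linarith)]; linarith

private lemma d_bound (hn₀ : 1 ≤ n₀) (H2 : ∀ n : ℕ, |c (n + 1) - c n| ≤ Cl)
    (hct : ∀ k, n₀ ≤ k → ct k = c k + (1 / (n₀ : ℝ)) *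
      ∑ j ∈ Finset.Icc 1 (n₀ - 1),
        (((n₀ : ℝ) - j) / n₀) * (c (k + j) + c (k - j) - 2 * c k))
    (k : ℕ) (hk : n₀ ≤ k) : |ct k - c k| ≤ 2 * n₀ * Cl := by
  have hCl : 0 ≤ Cl := le_trans (abs_nonneg _) (H2 0)
  have h3 : (1:ℝ) ≤ (n₀:ℝ) := by exact_mod_cast hn₀
  rw [hct k hk]
  have heq : c k + (1 / (n₀ : ℝ)) * ∑ j ∈ Finset.Icc 1 (n₀ - 1),
        (((n₀ : ℝ) - j) / n₀) * (c (k + j) + c (k - j) - 2 * c k) - c k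
      = (1 / (n₀ : ℝ)) * ∑ j ∈ Finset.Icc 1 (n₀ - 1),
        (((n₀ : ℝ) - j) / n₀) * (c (k + j) + c (k - j) - 2 * c k) := by ring
  rw [heq, abs_mul]
  have habs1 : |(1:ℝ) / (n₀:ℝ)| = 1 / (n₀:ℝ) := abs_of_pos (by positivity)
  rw [habs1]
  have hsum : |∑ j ∈ Finset.Icc 1 (n₀ - 1),
        (((n₀ : ℝ) - j) / n₀) * (c (k + j) + c (k - j) - 2 * c k)| ≤ (n₀ : ℝ) * (2 * n₀ * Cl) := by
    calc |∑ j ∈ Finset.Icc 1 (n₀ - 1), (((n₀ : ℝ) - j) / n₀) * (c (k + j) + c (k - j) - 2 * c k)|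
        ≤ ∑ j ∈ Finset.Icc 1 (n₀ - 1), |(((n₀ : ℝ) - j) / n₀) * (c (k + j) + c (k - j) - 2 * c k)| :=
          Finset.abs_sum_le_sum_abs _ _
      _ ≤ ∑ j ∈ Finset.Icc 1 (n₀ - 1), (2 * n₀ * Cl) := by
          apply Finset.sum_le_sum
          intro j hj
          rw [abs_mul]
          have hw := weight_bound n₀ hn₀ j hj
          have hd := delta2_bound c n₀ Cl hn₀ H2 j k (by simp only [mem_Icc] at hj; omega) hk
          have : |((n₀ : ℝ) - j) / n₀| ≤ 1 := by rw [abs_of_nonneg hw.1]; exact hw.2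
          calc |((n₀ : ℝ) - j) / n₀| * |c (k + j) + c (k - j) - 2 * c k|
              ≤ 1 * |c (k + j) + c (k - j) - 2 * c k| :=
                mul_le_mul_of_nonneg_right this (abs_nonneg _)
            _ = |c (k + j) + c (k - j) - 2 * c k| := one_mul _
            _ ≤ 2 * n₀ * Cl := hd
      _ = ((n₀ - 1 : ℕ) : ℝ) * (2 * n₀ * Cl) := by
          rw [Finset.sum_const, Nat.card_Icc]; simp [nsmul_eq_mul]
      _ ≤ (n₀ : ℝ) * (2 * n₀ * Cl) := by
          apply mul_le_mul_of_nonneg_right _ (by positivity)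
          exact_mod_cast (by omega : n₀ - 1 ≤ n₀)
  calc (1 / (n₀:ℝ)) * |∑ j ∈ Finset.Icc 1 (n₀ - 1),
        (((n₀ : ℝ) - j) / n₀) * (c (k + j) + c (k - j) - 2 * c k)|
      ≤ (1 / (n₀:ℝ)) * ((n₀ : ℝ) * (2 * n₀ * Cl)) := by
        apply mul_le_mul_of_nonneg_left hsum (by positivity)
    _ = 2 * n₀ * Cl := by field_simp

end

section
variable (c : ℕ → ℝ) (n₀ : ℕ) (Cl : ℝ) (ct : ℕ → ℝ)

private lemma dsum_bound (hn₀ : 1 ≤ n₀) (H2 : ∀ n : ℕ, |c (n + 1) - c n| ≤ Cl)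
    (hct : ∀ k, n₀ ≤ k → ct k = c k + (1 / (n₀ : ℝ)) *
      ∑ j ∈ Finset.Icc 1 (n₀ - 1),
        (((n₀ : ℝ) - j) / n₀) * (c (k + j) + c (k - j) - 2 * c k))
    (N : ℕ) : |∑ i ∈ range N, (ct (n₀ + i) - c (n₀ + i))| ≤ 2 * n₀^2 * Cl := by
  have hCl : 0 ≤ Cl := le_trans (abs_nonneg _) (H2 0)
  have h3 : (1:ℝ) ≤ (n₀:ℝ) := by exact_mod_cast hn₀
  have step1 : ∑ i ∈ range N, (ct (n₀ + i) - c (n₀ + i))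
      = (1 / (n₀ : ℝ)) * ∑ j ∈ Finset.Icc 1 (n₀ - 1), (((n₀ : ℝ) - j) / n₀) *
          ∑ i ∈ range N, (c (n₀ + i + j) + c (n₀ + i - j) - 2 * c (n₀ + i)) := by
    have e1 : ∀ i ∈ range N, ct (n₀ + i) - c (n₀ + i)
        = ∑ j ∈ Finset.Icc 1 (n₀ - 1), (1 / (n₀ : ℝ)) * ((((n₀ : ℝ) - j) / n₀) *
            (c (n₀ + i + j) + c (n₀ + i - j) - 2 * c (n₀ + i))) := by
      intro i _
      rw [hct (n₀ + i) (by omega), ← Finset.mul_sum]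
      ring
    rw [Finset.sum_congr rfl e1, Finset.sum_comm]
    rw [Finset.mul_sum]
    apply Finset.sum_congr rfl
    intro j _
    rw [Finset.mul_sum, Finset.mul_sum]
  rw [step1, abs_mul, abs_of_pos (by positivity : (0:ℝ) < 1 / (n₀:ℝ))]
  have inner_bound : ∀ j ∈ Finset.Icc 1 (n₀ - 1),
      |∑ i ∈ range N, (c (n₀ + i + j) + c (n₀ + i - j) - 2 * c (n₀ + i))| ≤ 2 * n₀^2 * Cl := by
    intro j hj
    simp only [mem_Icc] at hj
    set h : ℕ → ℝ := fun m => c (n₀ + m) - c (n₀ + m - j) with hh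
    have habs : ∀ m, |h m| ≤ (j:ℝ) * Cl := by
      intro m
      have he : (n₀ + m - j) + j = n₀ + m := by omega
      have := incr_bound c Cl H2 j (n₀ + m - j)
      rw [he] at this
      simpa [hh] using this
    have hΔ : ∀ i, c (n₀ + i + j) + c (n₀ + i - j) - 2 * c (n₀ + i) = h (i + j) - h i := by
      intro i
      simp only [hh]
      have e1 : n₀ + (i + j) = n₀ + i + j := by omega
      have e2 : n₀ + (i + j) - j = n₀ + i := by omega
      have e3 : n₀ + i + j - j = n₀ + i := by omega
      rw [e1, e3]
      ring
    have hT : ∑ i ∈ range N, (c (n₀ + i + j) + c (n₀ + i - j) - 2 * c (n₀ + i))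
        = ∑ i ∈ range j, (h (N + i) - h i) := by
      rw [Finset.sum_congr rfl (fun i _ => hΔ i)]
      exact sum_shift h j N
    rw [hT]
    calc |∑ i ∈ range j, (h (N + i) - h i)|
        ≤ ∑ i ∈ range j, |h (N + i) - h i| := Finset.abs_sum_le_sum_abs _ _
      _ ≤ ∑ i ∈ range j, (2 * n₀ * Cl) := by
          apply Finset.sum_le_sum
          intro i _
          have h1 := habs (N + i)
          have h2 := habs i
          have hjn : (j:ℝ) ≤ (n₀:ℝ) := by exact_mod_cast (by omega : j ≤ n₀)
          calc |h (N + i) - h i| ≤ |h (N + i)| + |h i| := abs_sub _ _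
            _ ≤ 2 * n₀ * Cl := by nlinarith
      _ = (j : ℝ) * (2 * n₀ * Cl) := by rw [Finset.sum_const, Finset.card_range]; simp [nsmul_eq_mul]
      _ ≤ (n₀ : ℝ) * (2 * n₀ * Cl) := by
          apply mul_le_mul_of_nonneg_right _ (by positivity)
          exact_mod_cast (by omega : j ≤ n₀)
      _ = 2 * n₀^2 * Cl := by ring
  calc (1 / (n₀:ℝ)) * |∑ j ∈ Finset.Icc 1 (n₀ - 1), (((n₀ : ℝ) - j) / n₀) *
          ∑ i ∈ range N, (c (n₀ + i + j) + c (n₀ + i - j) - 2 * c (n₀ + i))|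
      ≤ (1 / (n₀:ℝ)) * ((n₀:ℝ) * (2 * n₀^2 * Cl)) := by
        apply mul_le_mul_of_nonneg_left _ (by positivity)
        calc |∑ j ∈ Finset.Icc 1 (n₀ - 1), (((n₀ : ℝ) - j) / n₀) *
                ∑ i ∈ range N, (c (n₀ + i + j) + c (n₀ + i - j) - 2 * c (n₀ + i))|
            ≤ ∑ j ∈ Finset.Icc 1 (n₀ - 1), |(((n₀ : ℝ) - j) / n₀) *
                ∑ i ∈ range N, (c (n₀ + i + j) + c (n₀ + i - j) - 2 * c (n₀ + i))| :=
              Finset.abs_sum_le_sum_abs _ _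
          _ ≤ ∑ j ∈ Finset.Icc 1 (n₀ - 1), (2 * n₀^2 * Cl) := by
              apply Finset.sum_le_sum
              intro j hj
              rw [abs_mul]
              have hw : |((n₀ : ℝ) - j) / n₀| ≤ 1 := by
                simp only [mem_Icc] at hj
                have h1 : (1:ℝ) ≤ (j:ℝ) := by exact_mod_cast hj.1
                have h2 : (j:ℝ) ≤ (n₀:ℝ) := by exact_mod_cast (by omega : j ≤ n₀)
                rw [abs_of_nonneg (div_nonneg (by linarith) (by linarith))]
                rw [div_le_one (by linarith)]; linarith
              have hib := inner_bound j hj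
              calc |((n₀ : ℝ) - j) / n₀| * |∑ i ∈ range N,
                      (c (n₀ + i + j) + c (n₀ + i - j) - 2 * c (n₀ + i))|
                  ≤ 1 * |∑ i ∈ range N, (c (n₀ + i + j) + c (n₀ + i - j) - 2 * c (n₀ + i))| :=
                    mul_le_mul_of_nonneg_right hw (abs_nonneg _)
                _ ≤ 2 * n₀^2 * Cl := by rw [one_mul]; exact hib
          _ = ((n₀ - 1 : ℕ) : ℝ) * (2 * n₀^2 * Cl) := by
              rw [Finset.sum_const, Nat.card_Icc]; simp [nsmul_eq_mul]
          _ ≤ (n₀ : ℝ) * (2 * n₀^2 * Cl) := by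
              apply mul_le_mul_of_nonneg_right _ (by positivity)
              exact_mod_cast (by omega : n₀ - 1 ≤ n₀)
    _ = 2 * n₀^2 * Cl := by field_simp


end

section
variable (c : ℕ → ℝ) (n₀ : ℕ) (ct : ℕ → ℝ)

private lemma wsum (hn₀ : 1 ≤ n₀) :
    ∑ j ∈ Icc 1 (n₀ - 1), ((n₀ : ℝ) - j) / n₀ = ((n₀ : ℝ) - 1) / 2 := by
  have hcast : ((n₀ - 1 : ℕ) : ℝ) = (n₀ : ℝ) - 1 := by
    rw [Nat.cast_sub hn₀]; norm_num
  have hpos : (0:ℝ) < (n₀:ℝ) := by exact_mod_cast hn₀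
  have h1 : ∑ j ∈ Icc 1 (n₀ - 1), ((n₀ : ℝ) - j) / n₀
      = (∑ j ∈ Icc 1 (n₀ - 1), ((n₀ : ℝ) - j)) / n₀ := by
    rw [Finset.sum_div]
  rw [h1, Finset.sum_sub_distrib, Finset.sum_const, Nat.card_Icc, gauss_Icc]
  simp only [nsmul_eq_mul]
  rw [show n₀ - 1 + 1 - 1 = n₀ - 1 from by omega, hcast]
  field_simp
  ring

private lemma ct_ge (hc0 : c 0 = 0) (hcpos : ∀ k, 1 ≤ k → 0 < c k) (hn₀ : 1 ≤ n₀)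
    (hct : ∀ k, n₀ ≤ k → ct k = c k + (1 / (n₀ : ℝ)) *
      ∑ j ∈ Finset.Icc 1 (n₀ - 1),
        (((n₀ : ℝ) - j) / n₀) * (c (k + j) + c (k - j) - 2 * c k))
    (k : ℕ) (hk : n₀ ≤ k) : c k / n₀ ≤ ct k := by
  have hpos : (0:ℝ) < (n₀:ℝ) := by exact_mod_cast hn₀
  have hck : 0 < c k := hcpos k (by omega)
  have hnn : ∀ m : ℕ, 0 ≤ c m := by
    intro m
    rcases Nat.eq_zero_or_pos m with rfl | hm
    · rw [hc0]
    · exact le_of_lt (hcpos m hm)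
  rw [hct k hk]
  have hterm : ∀ j ∈ Icc 1 (n₀ - 1),
      (((n₀ : ℝ) - j) / n₀) * (-2 * c k) ≤ (((n₀ : ℝ) - j) / n₀) * (c (k + j) + c (k - j) - 2 * c k) := by
    intro j hj
    simp only [mem_Icc] at hj
    have h2 : (j:ℝ) ≤ (n₀:ℝ) := by exact_mod_cast (by omega : j ≤ n₀)
    have hw : 0 ≤ ((n₀ : ℝ) - j) / n₀ := div_nonneg (by linarith) (by linarith)
    apply mul_le_mul_of_nonneg_left _ hw
    have := hnn (k + j); have := hnn (k - j)
    linarith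
  have hsum : ∑ j ∈ Icc 1 (n₀ - 1), (((n₀ : ℝ) - j) / n₀) * (-2 * c k)
      ≤ ∑ j ∈ Icc 1 (n₀ - 1), (((n₀ : ℝ) - j) / n₀) * (c (k + j) + c (k - j) - 2 * c k) :=
    Finset.sum_le_sum hterm
  have heval : ∑ j ∈ Icc 1 (n₀ - 1), (((n₀ : ℝ) - j) / n₀) * (-2 * c k)
      = (((n₀:ℝ) - 1) / 2) * (-2 * c k) := by
    rw [← Finset.sum_mul, wsum n₀ hn₀]
  have := mul_le_mul_of_nonneg_left hsum (le_of_lt (by positivity : (0:ℝ) < 1 / (n₀:ℝ)))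
  rw [heval] at this
  have heq : c k + (1 / (n₀:ℝ)) * ((((n₀:ℝ) - 1) / 2) * (-2 * c k)) = c k / n₀ := by
    field_simp; ring
  linarith

private lemma ct_pos (hc0 : c 0 = 0) (hcpos : ∀ k, 1 ≤ k → 0 < c k) (hn₀ : 1 ≤ n₀)
    (hct : ∀ k, n₀ ≤ k → ct k = c k + (1 / (n₀ : ℝ)) *
      ∑ j ∈ Finset.Icc 1 (n₀ - 1),
        (((n₀ : ℝ) - j) / n₀) * (c (k + j) + c (k - j) - 2 * c k))
    (hct' : ∀ k, k < n₀ → ct k = ct n₀ * k / n₀) :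
    ∀ k, 1 ≤ k → 0 < ct k := by
  have hpos : (0:ℝ) < (n₀:ℝ) := by exact_mod_cast hn₀
  have hn₀pos : 0 < ct n₀ :=
    lt_of_lt_of_le (div_pos (hcpos n₀ hn₀) hpos) (ct_ge c n₀ ct hc0 hcpos hn₀ hct n₀ le_rfl)
  intro k hk
  rcases le_or_gt n₀ k with h | h
  · exact lt_of_lt_of_le (div_pos (hcpos k hk) hpos) (ct_ge c n₀ ct hc0 hcpos hn₀ hct k h)
  · rw [hct' k h]
    have hkpos : (0:ℝ) < (k:ℝ) := by exact_mod_cast hk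
    positivity

end

private lemma c_growth (c : ℕ → ℝ) (hc0 : c 0 = 0) (hcpos : ∀ k, 1 ≤ k → 0 < c k)
    (δ : ℝ) (n₀ : ℕ) (hn₀ : 1 ≤ n₀)
    (H1 : ∀ n m : ℕ, n + n₀ ≤ m → δ ≤ c m - c n) :
    ∀ q k, n₀ * q ≤ k → δ * q ≤ c k := by
  intro q
  induction q with
  | zero =>
    intro k _
    simp only [Nat.cast_zero, mul_zero]
    rcases Nat.eq_zero_or_pos k with rfl | hk
    · rw [hc0]
    · exact le_of_lt (hcpos k hk)
  | succ q ih =>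
    intro k hk
    have hmul : n₀ * (q + 1) = n₀ * q + n₀ := Nat.mul_succ n₀ q
    have hkn : n₀ ≤ k := by omega
    have h1 : δ ≤ c k - c (k - n₀) := H1 (k - n₀) k (by omega)
    have h2 : δ * q ≤ c (k - n₀) := ih (k - n₀) (by omega)
    push_cast
    linarith

private lemma c_ge_lin (c : ℕ → ℝ) (hc0 : c 0 = 0) (hcpos : ∀ k, 1 ≤ k → 0 < c k)
    (δ : ℝ) (hδ : 0 < δ) (n₀ : ℕ) (hn₀ : 1 ≤ n₀)
    (H1 : ∀ n m : ℕ, n + n₀ ≤ m → δ ≤ c m - c n) :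
    ∀ k, 2 * n₀ ≤ k → δ * k / (2 * n₀) ≤ c k := by
  intro k hk
  have hq : δ * (k / n₀ : ℕ) ≤ c k :=
    c_growth c hc0 hcpos δ n₀ hn₀ H1 (k / n₀) k (Nat.mul_div_le k n₀)
  have hmod := Nat.div_add_mod k n₀
  have hmlt : k % n₀ < n₀ := Nat.mod_lt k (by omega)
  have hcast : (n₀ : ℝ) * ((k / n₀ : ℕ) : ℝ) + ((k % n₀ : ℕ) : ℝ) = (k : ℝ) := by
    exact_mod_cast congrArg (Nat.cast : ℕ → ℝ) hmod
  have h1 : ((k % n₀ : ℕ) : ℝ) < (n₀ : ℝ) := by exact_mod_cast hmlt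
  have h2 : (2 * (n₀:ℝ)) ≤ (k : ℝ) := by exact_mod_cast hk
  have hn : (1:ℝ) ≤ (n₀:ℝ) := by exact_mod_cast hn₀
  -- (k/n₀ : ℕ) ≥ k/(2 n₀)
  have h3 : (k : ℝ) / (2 * n₀) ≤ ((k / n₀ : ℕ) : ℝ) := by
    rw [div_le_iff₀ (by positivity)]
    nlinarith
  calc δ * k / (2 * n₀) = δ * ((k:ℝ) / (2 * n₀)) := by ring
    _ ≤ δ * ((k / n₀ : ℕ) : ℝ) := by apply mul_le_mul_of_nonneg_left h3 (le_of_lt hδ)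
    _ ≤ c k := hq

private lemma c_ge_delta (c : ℕ → ℝ) (hc0 : c 0 = 0)
    (δ : ℝ) (n₀ : ℕ)
    (H1 : ∀ n m : ℕ, n + n₀ ≤ m → δ ≤ c m - c n) :
    ∀ k, n₀ ≤ k → δ ≤ c k := by
  intro k hk
  have := H1 0 k (by omega)
  rw [hc0] at this
  linarith

theorem averaged_measure_equivalent
    (c : ℕ → ℝ) (hc0 : c 0 = 0) (hcpos : ∀ k, 1 ≤ k → 0 < c k)
    (δ : ℝ) (hδ : 0 < δ) (n₀ : ℕ) (hn₀ : 1 ≤ n₀)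
    (H1 : ∀ n m : ℕ, n + n₀ ≤ m → δ ≤ c m - c n)
    (Cl : ℝ) (H2 : ∀ n : ℕ, |c (n + 1) - c n| ≤ Cl)
    (ct : ℕ → ℝ)
    (hct : ∀ k, n₀ ≤ k → ct k = c k + (1 / (n₀ : ℝ)) *
      ∑ j ∈ Finset.Icc 1 (n₀ - 1),
        (((n₀ : ℝ) - j) / n₀) * (c (k + j) + c (k - j) - 2 * c k))
    (hct' : ∀ k, k < n₀ → ct k = ct n₀ * k / n₀)
    -- μ and μ̃ : normalized measures proportional to ∏_{k=1}^n c(k)⁻¹ resp. ∏ c̃(k)⁻¹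
    (μ μt : ℕ → ℝ)
    (hμsum : Summable μ) (hμ1 : ∑' n, μ n = 1)
    (hμtsum : Summable μt) (hμt1 : ∑' n, μt n = 1)
    (Z Zt : ℝ) (hZ : 0 < Z) (hZt : 0 < Zt)
    (hμ : ∀ n, μ n = (∏ k ∈ Finset.Icc 1 n, (c k)⁻¹) / Z)
    (hμt : ∀ n, μt n = (∏ k ∈ Finset.Icc 1 n, (ct k)⁻¹) / Zt) :
    ∃ C : ℝ, 1 ≤ C ∧ ∀ n : ℕ, C⁻¹ ≤ μt n / μ n ∧ μt n / μ n ≤ C := by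
  have hCl : 0 ≤ Cl := le_trans (abs_nonneg _) (H2 0)
  have hnR : (1:ℝ) ≤ (n₀:ℝ) := by exact_mod_cast hn₀
  set K₀ : ℕ := max (2 * n₀) ⌈8 * (n₀:ℝ)^2 * Cl / δ⌉₊ with hK₀
  set a : ℕ := K₀ + 1 with ha
  have hK₀1 : 1 ≤ K₀ := by
    have : 2 * n₀ ≤ K₀ := le_max_left _ _
    omega
  have ha2 : 2 ≤ a := by omega
  have han₀ : ∀ k, a ≤ k → n₀ ≤ k := by intro k hk; have : 2*n₀ ≤ K₀ := le_max_left _ _; omega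
  have haR : (2:ℝ) ≤ (a:ℝ) := by exact_mod_cast ha2
  set x : ℕ → ℝ := fun k => (ct k - c k) / c k with hx
  -- lower bounds on c for k ≥ a
  have hclow : ∀ k, a ≤ k → δ * k / (2 * n₀) ≤ c k := by
    intro k hk
    apply c_ge_lin c hc0 hcpos δ hδ n₀ hn₀ H1
    have : 2*n₀ ≤ K₀ := le_max_left _ _
    omega
  have hc4 : ∀ k, a ≤ k → 4 * n₀ * Cl ≤ c k := by
    intro k hk
    have h1 := hclow k hk
    have h2 : (8 * (n₀:ℝ)^2 * Cl / δ) ≤ (K₀ : ℝ) := by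
      have h3n : ⌈8 * (n₀:ℝ)^2 * Cl / δ⌉₊ ≤ K₀ := by rw [hK₀]; exact le_max_right _ _
      exact le_trans (Nat.le_ceil _) (Nat.cast_le.mpr h3n)
    have h4 : (K₀ : ℝ) ≤ (k : ℝ) := by exact_mod_cast (by omega : K₀ ≤ k)
    have h5 : 8 * (n₀:ℝ)^2 * Cl / δ ≤ (k:ℝ) := le_trans h2 h4
    have h6 : 8 * (n₀:ℝ)^2 * Cl ≤ δ * k := by
      rw [div_le_iff₀ hδ] at h5; linarith
    calc 4 * (n₀:ℝ) * Cl = (8 * (n₀:ℝ)^2 * Cl) / (2 * n₀) := by field_simp; ring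
      _ ≤ δ * k / (2 * n₀) := by gcongr
      _ ≤ c k := h1
  have hcδ : ∀ k, a ≤ k → δ ≤ c k := fun k hk => c_ge_delta c hc0 δ n₀ H1 k (han₀ k hk)
  have hcpos' : ∀ k, a ≤ k → 0 < c k := fun k hk => hcpos k (by omega)
  have hd : ∀ k, a ≤ k → |ct k - c k| ≤ 2 * n₀ * Cl :=
    fun k hk => d_bound c n₀ Cl ct hn₀ H2 hct k (han₀ k hk)
  have hxb : ∀ k, a ≤ k → |x k| ≤ 1/2 := by
    intro k hk
    have h1 := hd k hk
    have h2 := hc4 k hk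
    have h3 := hcpos' k hk
    simp only [hx]
    rw [abs_div, abs_of_pos h3, div_le_iff₀ h3]
    linarith
  have hcteq : ∀ k, a ≤ k → ct k = c k * (1 + x k) := by
    intro k hk
    have h3 := hcpos' k hk
    simp only [hx]
    field_simp
    ring
  have hxlb : ∀ k, a ≤ k → -(1/2) ≤ x k := by
    intro k hk
    have := hxb k hk
    have := neg_abs_le (x k)
    linarith
  -- partial sums of d starting at a
  have hG : ∀ n, |∑ i ∈ range n, (ct (a+i) - c (a+i))| ≤ 4 * n₀^2 * Cl := by
    intro n
    have hDa := dsum_bound c n₀ Cl ct hn₀ H2 hct (a - n₀)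
    have hDb := dsum_bound c n₀ Cl ct hn₀ H2 hct ((a - n₀) + n)
    have hsplit := Finset.sum_range_add (fun i => ct (n₀+i) - c (n₀+i)) (a - n₀) n
    have hidx : ∀ i : ℕ, n₀ + (a - n₀ + i) = a + i := by
      intro i
      have : n₀ ≤ a := han₀ a le_rfl
      omega
    have hre : ∑ i ∈ range n, (ct (n₀ + (a - n₀ + i)) - c (n₀ + (a - n₀ + i)))
        = ∑ i ∈ range n, (ct (a+i) - c (a+i)) := by
      apply Finset.sum_congr rfl
      intro i _
      rw [hidx i]
    rw [hre] at hsplit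
    have : ∑ i ∈ range n, (ct (a+i) - c (a+i))
        = (∑ i ∈ range (a - n₀ + n), (ct (n₀+i) - c (n₀+i)))
          - ∑ i ∈ range (a - n₀), (ct (n₀+i) - c (n₀+i)) := by
      rw [hsplit]; ring
    rw [this]
    calc |(∑ i ∈ range (a - n₀ + n), (ct (n₀+i) - c (n₀+i)))
          - ∑ i ∈ range (a - n₀), (ct (n₀+i) - c (n₀+i))|
        ≤ |∑ i ∈ range (a - n₀ + n), (ct (n₀+i) - c (n₀+i))|
          + |∑ i ∈ range (a - n₀), (ct (n₀+i) - c (n₀+i))| := abs_sub _ _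
      _ ≤ 2 * n₀^2 * Cl + 2 * n₀^2 * Cl := add_le_add hDb hDa
      _ = 4 * n₀^2 * Cl := by ring
  have hppos : ∀ i : ℕ, (0:ℝ) < ((a + i : ℕ) : ℝ) := by
    intro i
    have : 1 ≤ a + i := by omega
    exact_mod_cast Nat.lt_of_lt_of_le Nat.zero_lt_one this
  have hmp : ∀ i : ℕ, (0:ℝ) < δ * ((a + i : ℕ) : ℝ) / (2 * n₀) := by
    intro i
    have := hppos i
    positivity
  have hclow' : ∀ i : ℕ, δ * ((a + i : ℕ) : ℝ) / (2 * n₀) ≤ c (a + i) :=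
    fun i => hclow (a+i) (Nat.le_add_right a i)
  have hclow'' : ∀ i : ℕ, δ * ((a + i : ℕ) : ℝ) / (2 * n₀) ≤ c (a + (i+1)) := by
    intro i
    refine le_trans ?_ (hclow (a + (i+1)) (by omega))
    have h1 : ((a + i : ℕ) : ℝ) ≤ ((a + (i+1) : ℕ) : ℝ) := by exact_mod_cast (by omega : a+i ≤ a+(i+1))
    apply div_le_div_of_nonneg_right ?_ (by positivity)
    nlinarith
  have hv : ∀ n, ∑ i ∈ range n, |(c (a+(i+1)))⁻¹ - (c (a+i))⁻¹| ≤ Cl * (2*(n₀:ℝ)/δ)^2 := by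
    intro n
    have hterm : ∀ i ∈ range n, |(c (a+(i+1)))⁻¹ - (c (a+i))⁻¹|
        ≤ (Cl * (2*(n₀:ℝ)/δ)^2) * (((a + i : ℕ) : ℝ)^2)⁻¹ := by
      intro i _
      have h1 : 0 < c (a+i) := hcpos' _ (Nat.le_add_right a i)
      have h2 : 0 < c (a+(i+1)) := hcpos' _ (by omega)
      have hnum : |c (a+i) - c (a+(i+1))| ≤ Cl := by
        rw [abs_sub_comm]
        have := H2 (a+i)
        have he : a + i + 1 = a + (i+1) := by omega
        rwa [he] at this
      rw [inv_sub_inv (ne_of_gt h2) (ne_of_gt h1), abs_div, abs_of_pos (mul_pos h2 h1)]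
      have hden : (δ * ((a + i : ℕ) : ℝ) / (2 * n₀)) * (δ * ((a + i : ℕ) : ℝ) / (2 * n₀))
          ≤ c (a+(i+1)) * c (a+i) :=
        mul_le_mul (hclow'' i) (hclow' i) (le_of_lt (hmp i)) (le_of_lt h2)
      have hstep : |c (a+i) - c (a+(i+1))| / (c (a+(i+1)) * c (a+i))
          ≤ Cl / ((δ * ((a + i : ℕ) : ℝ) / (2 * n₀)) * (δ * ((a + i : ℕ) : ℝ) / (2 * n₀))) :=
        div_le_div₀ hCl hnum (mul_pos (hmp i) (hmp i)) hden
      refine le_trans hstep (le_of_eq ?_)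
      have hp := hppos i
      field_simp
    calc ∑ i ∈ range n, |(c (a+(i+1)))⁻¹ - (c (a+i))⁻¹|
        ≤ ∑ i ∈ range n, (Cl * (2*(n₀:ℝ)/δ)^2) * (((a + i : ℕ) : ℝ)^2)⁻¹ :=
          Finset.sum_le_sum hterm
      _ = (Cl * (2*(n₀:ℝ)/δ)^2) * ∑ i ∈ range n, (((a + i : ℕ) : ℝ)^2)⁻¹ := by
          rw [← Finset.mul_sum]
      _ ≤ (Cl * (2*(n₀:ℝ)/δ)^2) * ((a:ℝ)-1)⁻¹ := by
          apply mul_le_mul_of_nonneg_left (sum_inv_sq a ha2 n) (by positivity)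
      _ ≤ (Cl * (2*(n₀:ℝ)/δ)^2) * 1 := by
          apply mul_le_mul_of_nonneg_left _ (by positivity)
          apply inv_le_one_of_one_le₀
          linarith
      _ = Cl * (2*(n₀:ℝ)/δ)^2 := mul_one _
  have hfb : ∀ i : ℕ, |(c (a+i))⁻¹| ≤ δ⁻¹ := by
    intro i
    have h1 : 0 < c (a+i) := hcpos' _ (Nat.le_add_right a i)
    rw [abs_of_pos (inv_pos.mpr h1)]
    exact inv_anti₀ hδ (hcδ _ (Nat.le_add_right a i))
  have hS : ∀ n, |∑ i ∈ range n, x (a+i)|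
      ≤ δ⁻¹ * (4*n₀^2*Cl) + (Cl * (2*(n₀:ℝ)/δ)^2) * (4*n₀^2*Cl) := by
    intro n
    have hab := abel_bound (fun i => (c (a+i))⁻¹) (fun i => ct (a+i) - c (a+i)) δ⁻¹
      (Cl * (2*(n₀:ℝ)/δ)^2) (4*n₀^2*Cl) hG hfb hv n
    have hre : ∑ i ∈ range n, x (a+i)
        = ∑ i ∈ range n, (c (a+i))⁻¹ * (ct (a+i) - c (a+i)) := by
      apply Finset.sum_congr rfl
      intro i _
      simp only [hx]
      rw [div_eq_inv_mul]
    rw [hre]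
    exact hab
  have hQ : ∀ n, ∑ i ∈ range n, (x (a+i))^2 ≤ (2*(n₀:ℝ)*Cl)^2 * (2*(n₀:ℝ)/δ)^2 := by
    intro n
    have hterm : ∀ i ∈ range n, (x (a+i))^2
        ≤ ((2*(n₀:ℝ)*Cl)^2 * (2*(n₀:ℝ)/δ)^2) * (((a + i : ℕ) : ℝ)^2)⁻¹ := by
      intro i _
      have h1 : 0 < c (a+i) := hcpos' _ (Nat.le_add_right a i)
      have hdb := hd (a+i) (Nat.le_add_right a i)
      have hdsq : (ct (a+i) - c (a+i))^2 ≤ (2*(n₀:ℝ)*Cl)^2 := by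
        have := abs_le.mp hdb
        nlinarith [this.1, this.2]
      have hcsq : (δ * ((a + i : ℕ) : ℝ) / (2 * n₀)) * (δ * ((a + i : ℕ) : ℝ) / (2 * n₀))
          ≤ c (a+i) * c (a+i) :=
        mul_le_mul (hclow' i) (hclow' i) (le_of_lt (hmp i)) (le_of_lt h1)
      have hxsq : (x (a+i))^2 = (ct (a+i) - c (a+i))^2 / (c (a+i))^2 := by
        simp only [hx]
        rw [div_pow]
      rw [hxsq]
      have hstep : (ct (a+i) - c (a+i))^2 / (c (a+i))^2
          ≤ (2*(n₀:ℝ)*Cl)^2 / ((δ * ((a + i : ℕ) : ℝ) / (2 * n₀)) * (δ * ((a + i : ℕ) : ℝ) / (2 * n₀))) := by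
        apply div_le_div₀ (by positivity) hdsq (mul_pos (hmp i) (hmp i))
        calc (δ * ((a + i : ℕ) : ℝ) / (2 * n₀)) * (δ * ((a + i : ℕ) : ℝ) / (2 * n₀))
            ≤ c (a+i) * c (a+i) := hcsq
          _ = (c (a+i))^2 := by ring
      refine le_trans hstep (le_of_eq ?_)
      have hp := hppos i
      field_simp
    calc ∑ i ∈ range n, (x (a+i))^2
        ≤ ∑ i ∈ range n, ((2*(n₀:ℝ)*Cl)^2 * (2*(n₀:ℝ)/δ)^2) * (((a + i : ℕ) : ℝ)^2)⁻¹ :=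
          Finset.sum_le_sum hterm
      _ = ((2*(n₀:ℝ)*Cl)^2 * (2*(n₀:ℝ)/δ)^2) * ∑ i ∈ range n, (((a + i : ℕ) : ℝ)^2)⁻¹ := by
          rw [← Finset.mul_sum]
      _ ≤ ((2*(n₀:ℝ)*Cl)^2 * (2*(n₀:ℝ)/δ)^2) * ((a:ℝ)-1)⁻¹ := by
          apply mul_le_mul_of_nonneg_left (sum_inv_sq a ha2 n) (by positivity)
      _ ≤ ((2*(n₀:ℝ)*Cl)^2 * (2*(n₀:ℝ)/δ)^2) * 1 := by
          apply mul_le_mul_of_nonneg_left _ (by positivity)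
          apply inv_le_one_of_one_le₀
          linarith
      _ = (2*(n₀:ℝ)*Cl)^2 * (2*(n₀:ℝ)/δ)^2 := mul_one _
  -- product bounds
  have hPB := prod_bounds (fun i => x (a+i))
      (δ⁻¹ * (4*n₀^2*Cl) + (Cl * (2*(n₀:ℝ)/δ)^2) * (4*n₀^2*Cl))
      ((2*(n₀:ℝ)*Cl)^2 * (2*(n₀:ℝ)/δ)^2)
      (fun i => hxlb (a+i) (Nat.le_add_right a i)) hS hQ
  set KK : ℝ := δ⁻¹ * (4*n₀^2*Cl) + (Cl * (2*(n₀:ℝ)/δ)^2) * (4*n₀^2*Cl) with hKK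
  set QQ : ℝ := (2*(n₀:ℝ)*Cl)^2 * (2*(n₀:ℝ)/δ)^2 with hQQ
  have hppos2 : ∀ m, 0 < ∏ i ∈ range m, (1 + x (a+i)) := by
    intro m
    apply Finset.prod_pos
    intro i _
    have := hxlb (a+i) (Nat.le_add_right a i)
    linarith
  -- positivity of measures
  have hctpos : ∀ k, 1 ≤ k → 0 < ct k := ct_pos c n₀ ct hc0 hcpos hn₀ hct hct'
  have hIcc : ∀ m : ℕ, Finset.Icc 1 m = Finset.Ioc 0 m := by
    intro m
    rw [← Finset.Icc_add_one_left_eq_Ioc]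
    rfl
  have hPcpos : ∀ s : Finset ℕ, (∀ k ∈ s, 1 ≤ k) → 0 < ∏ k ∈ s, c k :=
    fun s hs => Finset.prod_pos (fun k hk => hcpos k (hs k hk))
  have hPtpos : ∀ s : Finset ℕ, (∀ k ∈ s, 1 ≤ k) → 0 < ∏ k ∈ s, ct k :=
    fun s hs => Finset.prod_pos (fun k hk => hctpos k (hs k hk))
  have hIoc1 : ∀ m n : ℕ, ∀ k ∈ Finset.Ioc m n, 1 ≤ k := by
    intro m n k hk
    have := (Finset.mem_Ioc.mp hk).1
    omega
  have hμpos : ∀ n, 0 < μ n := by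
    intro n
    rw [hμ n, hIcc n]
    exact div_pos (Finset.prod_pos (fun k hk => inv_pos.mpr (hcpos k (hIoc1 0 n k hk)))) hZ
  have hμtpos : ∀ n, 0 < μt n := by
    intro n
    rw [hμt n, hIcc n]
    exact div_pos (Finset.prod_pos (fun k hk => inv_pos.mpr (hctpos k (hIoc1 0 n k hk)))) hZt
  have hRpos : ∀ n, 0 < μt n / μ n := fun n => div_pos (hμtpos n) (hμpos n)
  -- ratio identity
  have hR : ∀ n, μt n / μ n = (Z / Zt) * ((∏ k ∈ Finset.Ioc 0 n, c k) / (∏ k ∈ Finset.Ioc 0 n, ct k)) := by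
    intro n
    rw [hμ n, hμt n, hIcc n, Finset.prod_inv_distrib, Finset.prod_inv_distrib]
    have h1 : (∏ k ∈ Finset.Ioc 0 n, c k) ≠ 0 := ne_of_gt (hPcpos _ (hIoc1 0 n))
    have h2 : (∏ k ∈ Finset.Ioc 0 n, ct k) ≠ 0 := ne_of_gt (hPtpos _ (hIoc1 0 n))
    field_simp
  have hsplit2 : ∀ n, K₀ ≤ n →
      μt n / μ n = (μt K₀ / μ K₀) * ∏ k ∈ Finset.Ioc K₀ n, (c k / ct k) := by
    intro n hn
    rw [hR n, hR K₀, Finset.prod_div_distrib]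
    rw [← Finset.prod_Ioc_consecutive (fun k => c k) (Nat.zero_le K₀) hn,
        ← Finset.prod_Ioc_consecutive (fun k => ct k) (Nat.zero_le K₀) hn]
    have h1 : (∏ k ∈ Finset.Ioc 0 K₀, c k) ≠ 0 := ne_of_gt (hPcpos _ (hIoc1 0 K₀))
    have h2 : (∏ k ∈ Finset.Ioc 0 K₀, ct k) ≠ 0 := ne_of_gt (hPtpos _ (hIoc1 0 K₀))
    have h3 : (∏ k ∈ Finset.Ioc K₀ n, c k) ≠ 0 := ne_of_gt (hPcpos _ (hIoc1 K₀ n))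
    have h4 : (∏ k ∈ Finset.Ioc K₀ n, ct k) ≠ 0 := ne_of_gt (hPtpos _ (hIoc1 K₀ n))
    field_simp
  have hVeq : ∀ n, K₀ ≤ n → ∏ k ∈ Finset.Ioc K₀ n, (c k / ct k)
      = (∏ i ∈ range (n - K₀), (1 + x (a+i)))⁻¹ := by
    intro n hn
    have h1 : ∀ k ∈ Finset.Ioc K₀ n, c k / ct k = (1 + x k)⁻¹ := by
      intro k hk
      have hak : a ≤ k := by
        have := (Finset.mem_Ioc.mp hk).1
        omega
      have hcpos'' := hcpos' k hak
      have h1x : (0:ℝ) < 1 + x k := by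
        have := hxlb k hak
        linarith
      rw [hcteq k hak, eq_comm, inv_eq_iff_eq_inv, eq_comm, inv_div]
      exact mul_div_cancel_left₀ _ (ne_of_gt hcpos'')
    rw [Finset.prod_congr rfl h1, Finset.prod_inv_distrib]
    congr 1
    rw [← Finset.Icc_add_one_left_eq_Ioc, ← Finset.Ico_add_one_right_eq_Icc, Finset.prod_Ico_eq_prod_range]
    have he : n + 1 - (K₀ + 1) = n - K₀ := by omega
    rw [he]
  -- tail bounds
  have htail : ∀ n, K₀ ≤ n →
      (μt K₀ / μ K₀) * (Real.exp KK)⁻¹ ≤ μt n / μ n ∧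
      μt n / μ n ≤ (μt K₀ / μ K₀) * (Real.exp (-(KK + 2*QQ)))⁻¹ := by
    intro n hn
    obtain ⟨hlo, hhi⟩ := hPB (n - K₀)
    have hPpos : 0 < ∏ i ∈ range (n - K₀), (1 + x (a+i)) := hppos2 _
    rw [hsplit2 n hn, hVeq n hn]
    have hRK := le_of_lt (hRpos K₀)
    constructor
    · exact mul_le_mul_of_nonneg_left (inv_anti₀ hPpos hhi) hRK
    · exact mul_le_mul_of_nonneg_left (inv_anti₀ (Real.exp_pos _) hlo) hRK
  -- assemble the constant
  set L : ℝ := (μt K₀ / μ K₀) * (Real.exp KK)⁻¹ with hL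
  set U : ℝ := (μt K₀ / μ K₀) * (Real.exp (-(KK + 2*QQ)))⁻¹ with hU
  have hLpos : 0 < L := mul_pos (hRpos K₀) (inv_pos.mpr (Real.exp_pos _))
  have hne : (Finset.range K₀).Nonempty := Finset.nonempty_range_iff.mpr (by omega)
  set g : ℕ → ℝ := fun n => max (μt n / μ n) (μt n / μ n)⁻¹ with hg
  set SUP : ℝ := (Finset.range K₀).sup' hne g with hSUP
  refine ⟨max 1 (max (max U L⁻¹) SUP), le_max_left _ _, ?_⟩
  intro n
  have hRn := hRpos n
  have hCpos : (0:ℝ) < max 1 (max (max U L⁻¹) SUP) :=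
    lt_of_lt_of_le one_pos (le_max_left _ _)
  rcases lt_or_ge n K₀ with hlt | hge
  · have hmem : n ∈ Finset.range K₀ := Finset.mem_range.mpr hlt
    have hsup : g n ≤ SUP := Finset.le_sup' g hmem
    have hgup : max (μt n / μ n) (μt n / μ n)⁻¹ ≤ max 1 (max (max U L⁻¹) SUP) := by
      refine le_trans hsup (le_trans (le_max_right (max U L⁻¹) SUP) (le_max_right 1 _))
    constructor
    · have h1 : (μt n / μ n)⁻¹ ≤ max 1 (max (max U L⁻¹) SUP) :=
        le_trans (le_max_right _ _) hgup
      have h2 := inv_anti₀ (inv_pos.mpr hRn) h1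
      rwa [inv_inv] at h2
    · exact le_trans (le_max_left _ _) hgup
  · obtain ⟨h1, h2⟩ := htail n hge
    constructor
    · have hLC : L⁻¹ ≤ max 1 (max (max U L⁻¹) SUP) :=
        le_trans (le_max_right U L⁻¹) (le_trans (le_max_left _ SUP) (le_max_right 1 _))
      have h3 := inv_anti₀ (inv_pos.mpr hLpos) hLC
      rw [inv_inv] at h3
      exact le_trans h3 h1
    · have hUC : U ≤ max 1 (max (max U L⁻¹) SUP) :=
        le_trans (le_max_left U L⁻¹) (le_trans (le_max_left _ SUP) (le_max_right 1 _))
      exact le_trans h2 hUC
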